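/- Let T be a twist on H ⊗ H with ‖T‖ < 1. Then for every ξ ∈ H the creation operator a*_T(ξ) on the twisted Fock space F_T(H) = ℂΩ ⊕ ⊕_{n≥1} H_{T,n} is bounded with ‖a*_T(ξ)‖ ≤ ‖ξ‖ / √(1 − ‖T‖). -/

import Mathlib

set_option synthInstance.maxHeartbeats 1000000
set_option maxHeartbeats 1000000

noncomputable section

section Aux

variable {F : Type*} [NormedAddCommGroup F] [InnerProductSpace ℂ F] [CompleteSpace F]

/-- Cauchy–Schwarz inequality for a positive operator. -/
lemma pos_cs' {T : F →L[ℂ] F} (hT : T.IsPositive) (x y : F) :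
    ((inner ℂ x (T y) : ℂ)).re ^ 2 ≤ ((inner ℂ x (T x) : ℂ)).re * ((inner ℂ y (T y) : ℂ)).re := by
  have h0 : (0 : F →L[ℂ] F) ≤ T := (ContinuousLinearMap.nonneg_iff_isPositive T).mpr hT
  set S := CFC.sqrt T with hSdef
  have hS : S * S = T := CFC.sqrt_mul_sqrt_self T h0
  have hSnn : (0 : F →L[ℂ] F) ≤ S := CFC.sqrt_nonneg _
  have hSsa : IsSelfAdjoint S := IsSelfAdjoint.of_nonneg hSnn
  have key : ∀ z w : F, (inner ℂ z (T w) : ℂ) = inner ℂ (S z) (S w) := by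
    intro z w
    rw [← hS]
    have : (S * S) w = S (S w) := rfl
    rw [this, ← ContinuousLinearMap.adjoint_inner_left S, hSsa.adjoint_eq]
  have h1 : ((inner ℂ x (T x) : ℂ)).re = ‖S x‖ ^ 2 := by
    rw [key, ← inner_self_eq_norm_sq (𝕜 := ℂ)]; rfl
  have h2 : ((inner ℂ y (T y) : ℂ)).re = ‖S y‖ ^ 2 := by
    rw [key, ← inner_self_eq_norm_sq (𝕜 := ℂ)]; rfl
  have h3 : |((inner ℂ x (T y) : ℂ)).re| ≤ ‖S x‖ * ‖S y‖ := by
    rw [key]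
    exact (Complex.abs_re_le_norm _).trans ((
      norm_inner_le_norm (𝕜 := ℂ) (S x) (S y) : ‖(inner ℂ (S x) (S y) : ℂ)‖ ≤ _))
  calc ((inner ℂ x (T y) : ℂ)).re ^ 2 = |((inner ℂ x (T y) : ℂ)).re| ^ 2 := (sq_abs _).symm
    _ ≤ (‖S x‖ * ‖S y‖) ^ 2 := pow_le_pow_left₀ (abs_nonneg _) h3 2
    _ = ‖S x‖ ^ 2 * ‖S y‖ ^ 2 := by ring
    _ = _ := by rw [h1, h2]

/-- A star-algebra homomorphism between operator algebras preserves positivity. -/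
lemma amp_pos' {G : Type*} [NormedAddCommGroup G] [InnerProductSpace ℂ G] [CompleteSpace G]
    (φ : (F →L[ℂ] F) →⋆ₐ[ℂ] (G →L[ℂ] G)) {A : F →L[ℂ] F} (hA : A.IsPositive) :
    (φ A).IsPositive := by
  rw [← ContinuousLinearMap.nonneg_iff_isPositive] at hA ⊢
  have hS : CFC.sqrt A * CFC.sqrt A = A := CFC.sqrt_mul_sqrt_self A hA
  have hSnn : (0 : F →L[ℂ] F) ≤ CFC.sqrt A := CFC.sqrt_nonneg _
  have hSsa : IsSelfAdjoint (CFC.sqrt A) := IsSelfAdjoint.of_nonneg hSnn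
  calc (0 : G →L[ℂ] G) ≤ star (φ (CFC.sqrt A)) * φ (CFC.sqrt A) := star_mul_self_nonneg _
    _ = φ A := by rw [← map_star, hSsa.star_eq, ← map_mul, hS]

/-- The key estimate: if `Q ≥ 0` and `Q R ≥ 0` with `‖R‖ ≤ c` then
`⟨v, Q R v⟩ ≤ c ⟨v, Q v⟩`. -/
lemma key' (Q R : F →L[ℂ] F) (hQ : Q.IsPositive) (hP : (Q * R).IsPositive)
    {c : ℝ} (hc : 0 < c) (hR : ‖R‖ ≤ c) (v : F) :
    ((inner ℂ v ((Q * R) v) : ℂ)).re ≤ c * ((inner ℂ v (Q v) : ℂ)).re := by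
  set P := Q * R with hPdef
  set a : ℕ → ℝ := fun k => ((inner ℂ ((R ^ k) v) (P ((R ^ k) v)) : ℂ)).re with ha
  set b : ℕ → ℝ := fun k => ((inner ℂ ((R ^ k) v) (Q ((R ^ k) v)) : ℂ)).re with hb
  have ha0 : ∀ k, 0 ≤ a k := fun k => by exact hP.re_inner_nonneg_right ((R ^ k) v)
  have hb0 : ∀ k, 0 ≤ b k := fun k => by exact hQ.re_inner_nonneg_right ((R ^ k) v)
  have hpow : ∀ k, (R ^ (k + 1)) v = R ((R ^ k) v) := by
    intro k; rw [pow_succ']; rfl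
  have hnormpow : ∀ k, ‖(R ^ k) v‖ ≤ c ^ k * ‖v‖ := by
    intro k
    induction k with
    | zero => simp
    | succ k ih =>
      rw [hpow]
      calc ‖R ((R ^ k) v)‖ ≤ ‖R‖ * ‖(R ^ k) v‖ := R.le_opNorm _
        _ ≤ c * (c ^ k * ‖v‖) := mul_le_mul hR ih (norm_nonneg _) hc.le
        _ = c ^ (k + 1) * ‖v‖ := by ring
  have hub : ∀ k, b k ≤ ‖Q‖ * ‖v‖ ^ 2 * c ^ (2 * k) := by
    intro k
    have h1 : b k ≤ ‖(R ^ k) v‖ * ‖Q ((R ^ k) v)‖ :=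
      (Complex.re_le_norm _).trans ((
        norm_inner_le_norm (𝕜 := ℂ) ((R ^ k) v) (Q ((R ^ k) v)) : ‖_‖ ≤ _))
    have h2 : ‖Q ((R ^ k) v)‖ ≤ ‖Q‖ * ‖(R ^ k) v‖ := Q.le_opNorm _
    have h3 : ‖(R ^ k) v‖ ≤ c ^ k * ‖v‖ := hnormpow k
    calc b k ≤ ‖(R ^ k) v‖ * (‖Q‖ * ‖(R ^ k) v‖) :=
          h1.trans (by apply mul_le_mul_of_nonneg_left h2 (norm_nonneg _))
      _ ≤ (c ^ k * ‖v‖) * (‖Q‖ * (c ^ k * ‖v‖)) := by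
          apply mul_le_mul h3 (mul_le_mul_of_nonneg_left h3 (norm_nonneg _))
            (by positivity) (by positivity)
      _ = ‖Q‖ * ‖v‖ ^ 2 * c ^ (2 * k) := by ring
  have hPQ : ∀ k, P ((R ^ k) v) = Q ((R ^ (k + 1)) v) := by
    intro k; rw [hpow]; rfl
  have h1 : ∀ k, a k ^ 2 ≤ b k * b (k + 1) := by
    intro k
    have : a k = ((inner ℂ ((R ^ k) v) (Q ((R ^ (k + 1)) v)) : ℂ)).re := by
      rw [ha]; simp only; rw [hPQ]
    rw [this]
    exact pos_cs' hQ _ _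
  have hadjQ : ∀ z : F, (inner ℂ (R z) (Q (R z)) : ℂ) = inner ℂ z (P (R z)) := by
    intro z
    have hstar : ContinuousLinearMap.adjoint R * Q = P := by
      have h := hP.isSelfAdjoint
      rw [IsSelfAdjoint, hPdef, star_mul, ContinuousLinearMap.star_eq_adjoint,
        ContinuousLinearMap.star_eq_adjoint, hQ.isSelfAdjoint.adjoint_eq] at h
      exact h
    calc (inner ℂ (R z) (Q (R z)) : ℂ)
        = inner ℂ z (ContinuousLinearMap.adjoint R (Q (R z))) := by
          rw [ContinuousLinearMap.adjoint_inner_right]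
      _ = inner ℂ z (P (R z)) := by
          have : ContinuousLinearMap.adjoint R (Q (R z)) =
              (ContinuousLinearMap.adjoint R * Q) (R z) := rfl
          rw [this, hstar]
  have h2 : ∀ k, b (k + 1) ^ 2 ≤ a k * a (k + 1) := by
    intro k
    have : b (k + 1) = ((inner ℂ ((R ^ k) v) (P ((R ^ (k + 1)) v)) : ℂ)).re := by
      rw [hb]; simp only
      rw [hpow, hadjQ, ← hpow]
    rw [this]
    exact pos_cs' hP _ _
  by_contra hcon
  push_neg at hcon
  have ha0' : a 0 = ((inner ℂ v (P v) : ℂ)).re := by simp [ha]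
  have hb0' : b 0 = ((inner ℂ v (Q v) : ℂ)).re := by simp [hb]
  rw [← ha0', ← hb0'] at hcon
  have hb0pos : 0 < b 0 := by
    rcases lt_or_eq_of_le (hb0 0) with h | h
    · exact h
    · exfalso
      have : a 0 ^ 2 ≤ 0 := by
        have := h1 0
        rw [← h] at this
        simpa using this
      have ha00 : a 0 = 0 := by nlinarith [ha0 0]
      rw [ha00, ← h] at hcon
      simp at hcon
  set ρ := a 0 / (c * b 0) with hρdef
  have hρ : 1 < ρ := by
    rw [hρdef, lt_div_iff₀ (by positivity)]
    linarith [hcon]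
  have hρa : a 0 = ρ * c * b 0 := by
    rw [hρdef, mul_assoc, div_mul_cancel₀ _ (mul_pos hc hb0pos).ne']
  have main : ∀ k, ρ * c * b k ≤ a k ∧ (ρ * c) ^ (2 * k) * b 0 ≤ b k := by
    intro k
    induction k with
    | zero => exact ⟨by rw [hρa], by simp⟩
    | succ k ih =>
      obtain ⟨hk1, hk2⟩ := ih
      have hbk : 0 < b k := lt_of_lt_of_le (by positivity) hk2
      have hak : 0 < a k := lt_of_lt_of_le (by positivity) hk1
      have step1 : ρ * c * a k ≤ b (k + 1) := by
        have hh := h1 k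
        have : a k * (ρ * c * b k) ≤ a k * a k :=
          mul_le_mul_of_nonneg_left hk1 hak.le
        nlinarith [hbk]
      constructor
      · have hh := h2 k
        nlinarith [hak, hb0 (k + 1), step1, mul_le_mul_of_nonneg_left step1 hak.le]
      · calc (ρ * c) ^ (2 * (k + 1)) * b 0 = (ρ * c) ^ 2 * ((ρ * c) ^ (2 * k) * b 0) := by ring
          _ ≤ (ρ * c) ^ 2 * b k := mul_le_mul_of_nonneg_left hk2 (by positivity)
          _ ≤ ρ * c * a k := by
              have := mul_le_mul_of_nonneg_left hk1 (by positivity : (0:ℝ) ≤ ρ * c)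
              nlinarith
          _ ≤ b (k + 1) := step1
  obtain ⟨n, hn⟩ := pow_unbounded_of_one_lt (‖Q‖ * ‖v‖ ^ 2 / b 0) hρ
  have hmain := (main n).2
  have hup := hub n
  have hcpow : (0 : ℝ) < c ^ (2 * n) := by positivity
  have hρn : ρ ^ (2 * n) * b 0 * c ^ (2 * n) ≤ ‖Q‖ * ‖v‖ ^ 2 * c ^ (2 * n) := by
    calc ρ ^ (2 * n) * b 0 * c ^ (2 * n) = (ρ * c) ^ (2 * n) * b 0 := by rw [mul_pow]; ring
      _ ≤ b n := hmain
      _ ≤ ‖Q‖ * ‖v‖ ^ 2 * c ^ (2 * n) := hup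
  have h5 : ρ ^ (2 * n) * b 0 ≤ ‖Q‖ * ‖v‖ ^ 2 :=
    le_of_mul_le_mul_right (by nlinarith) hcpow
  have h6 : ρ ^ n ≤ ρ ^ (2 * n) := pow_le_pow_right₀ (le_of_lt hρ) (by omega)
  have h7 : ‖Q‖ * ‖v‖ ^ 2 / b 0 < ρ ^ n := hn
  rw [div_lt_iff₀ hb0pos] at h7
  nlinarith [h6, mul_le_mul_of_nonneg_right h6 hb0pos.le]

end Aux

variable {E : ℕ → Type*} [∀ n, NormedAddCommGroup (E n)] [∀ n, InnerProductSpace ℂ (E n)]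
  [∀ n, CompleteSpace (E n)]

/-- `chainT T n k = T₁ T₂ ⋯ T_k`. -/
def chainT (T : ∀ n, ℕ → (E n →L[ℂ] E n)) (n : ℕ) : ℕ → (E n →L[ℂ] E n)
  | 0 => 1
  | k + 1 => chainT T n k * T n (k + 1)

/-- `Rop T n = 1 + T₁ + T₁T₂ + ⋯ + T₁⋯T_{n-1}`. -/
def Rop (T : ∀ n, ℕ → (E n →L[ℂ] E n)) (n : ℕ) : E n →L[ℂ] E n :=
  ∑ k ∈ Finset.range n, chainT T n k

/-- `P_{T,1} = 1`, `P_{T,n+1} = (1 ⊗ P_{T,n}) R_{T,n+1}`. -/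
def Pop (T : ∀ n, ℕ → (E n →L[ℂ] E n))
    (amp : ∀ n, (E n →L[ℂ] E n) →⋆ₐ[ℂ] (E (n + 1) →L[ℂ] E (n + 1))) :
    ∀ n, E n →L[ℂ] E n
  | 0 => 1
  | n + 1 => amp n (Pop T amp n) * Rop T (n + 1)

theorem stmt6 {H : Type*} [NormedAddCommGroup H] [InnerProductSpace ℂ H] [CompleteSpace H]
    (T : ∀ n, ℕ → (E n →L[ℂ] E n))
    (amp : ∀ n, (E n →L[ℂ] E n) →⋆ₐ[ℂ] (E (n + 1) →L[ℂ] E (n + 1)))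
    (hamp : ∀ n k, 1 ≤ k → k ≤ n - 1 → amp n (T n k) = T (n + 1) (k + 1))
    (hsa : ∀ n k, 1 ≤ k → k ≤ n - 1 → IsSelfAdjoint (T n k))
    -- the elementary tensor map `tens n ξ η = ξ ⊗ η ∈ H^{⊗(n+1)}`
    (tens : ∀ n, H →ₗ[ℂ] E n →ₗ[ℂ] E (n + 1))
    (htinner : ∀ n (ξ ξ' : H) (η η' : E n),
      (inner ℂ (tens n ξ η) (tens n ξ' η') : ℂ) = (inner ℂ ξ ξ' : ℂ) * (inner ℂ η η' : ℂ))
    (htamp : ∀ n (A : E n →L[ℂ] E n) (ξ : H) (η : E n),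
      amp n A (tens n ξ η) = tens n ξ (A η))
    (q : ℝ) (hq0 : 0 ≤ q) (hqlt : q < 1)
    -- `q = ‖T‖ < 1`
    (hqnorm : ∀ n k, 1 ≤ k → k ≤ n - 1 → ‖T n k‖ ≤ q)
    -- `T` is a twist: all `P_{T,n}` are positive
    (hpos : ∀ n, (Pop T amp n).IsPositive) :
    ∀ n (ξ : H) (η : E n),
      Real.sqrt ((inner ℂ (tens n ξ η) (Pop T amp (n + 1) (tens n ξ η)) : ℂ).re) ≤
        (‖ξ‖ / Real.sqrt (1 - q)) *
          Real.sqrt ((inner ℂ η (Pop T amp n η) : ℂ).re) := by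
  intro n ξ η
  have h1q : (0 : ℝ) < 1 - q := by linarith
  set v := tens n ξ η with hv
  set Q := amp n (Pop T amp n) with hQ
  set R := Rop T (n + 1) with hR
  have hPop : Pop T amp (n + 1) = Q * R := rfl
  have hQpos : Q.IsPositive := amp_pos' (amp n) (hpos n)
  have hPpos : (Q * R).IsPositive := by rw [← hPop]; exact hpos (n + 1)
  -- norm bound on R
  have hchain : ∀ k, k ≤ n → ‖chainT T (n + 1) k‖ ≤ q ^ k := by
    intro k
    induction k with
    | zero =>
      intro _
      rw [show chainT T (n + 1) 0 = 1 from rfl, pow_zero]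
      exact ContinuousLinearMap.opNorm_le_bound _ zero_le_one (fun x => by simp)
    | succ k ih =>
      intro hk
      have h1 : ‖chainT T (n + 1) k‖ ≤ q ^ k := ih (by omega)
      have h2 : ‖T (n + 1) (k + 1)‖ ≤ q := hqnorm (n + 1) (k + 1) (by omega) (by omega)
      calc ‖chainT T (n + 1) (k + 1)‖ = ‖chainT T (n + 1) k * T (n + 1) (k + 1)‖ := rfl
        _ ≤ ‖chainT T (n + 1) k‖ * ‖T (n + 1) (k + 1)‖ := norm_mul_le _ _
        _ ≤ q ^ k * q := mul_le_mul h1 h2 (norm_nonneg _) (by positivity)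
        _ = q ^ (k + 1) := by ring
  have hRnorm : ‖R‖ ≤ (1 - q)⁻¹ := by
    calc ‖R‖ ≤ ∑ k ∈ Finset.range (n + 1), ‖chainT T (n + 1) k‖ := by
          rw [hR, Rop]; exact norm_sum_le _ _
      _ ≤ ∑ k ∈ Finset.range (n + 1), q ^ k := by
          apply Finset.sum_le_sum
          intro k hk
          exact hchain k (by simpa using Nat.lt_succ_iff.mp (Finset.mem_range.mp hk))
      _ ≤ (1 - q)⁻¹ := by
          rw [geom_sum_eq (by linarith : q ≠ 1)]
          rw [div_le_iff_of_neg (by linarith : q - 1 < 0)]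
          have h0 : (0 : ℝ) ≤ q ^ (n + 1) := by positivity
          have hinv : (1 - q)⁻¹ * (q - 1) = -1 := by
            field_simp
            ring
          linarith
  have hkey : ((inner ℂ v ((Q * R) v) : ℂ)).re ≤ (1 - q)⁻¹ * ((inner ℂ v (Q v) : ℂ)).re :=
    key' Q R hQpos hPpos (by positivity) hRnorm v
  -- compute ⟨v, Q v⟩
  have hQv : ((inner ℂ v (Q v) : ℂ)).re = ‖ξ‖ ^ 2 * ((inner ℂ η (Pop T amp n η) : ℂ)).re := by
    have h1 : Q v = tens n ξ (Pop T amp n η) := htamp n (Pop T amp n) ξ η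
    rw [h1, hv, htinner]
    have hz : (inner ℂ ξ ξ : ℂ) = ((‖ξ‖ ^ 2 : ℝ) : ℂ) := by
      rw [inner_self_eq_norm_sq_to_K (𝕜 := ℂ)]; norm_cast
    rw [hz, Complex.re_ofReal_mul]
  have hηnn : 0 ≤ ((inner ℂ η (Pop T amp n η) : ℂ)).re := by
    simpa using (hpos n).re_inner_nonneg_right η
  have hLHS : ((inner ℂ v (Pop T amp (n + 1) v) : ℂ)).re ≤
      (1 - q)⁻¹ * (‖ξ‖ ^ 2 * ((inner ℂ η (Pop T amp n η) : ℂ)).re) := by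
    rw [hPop]
    rw [hQv] at hkey
    exact hkey
  calc Real.sqrt ((inner ℂ v (Pop T amp (n + 1) v) : ℂ).re)
      ≤ Real.sqrt ((1 - q)⁻¹ * (‖ξ‖ ^ 2 * ((inner ℂ η (Pop T amp n η) : ℂ)).re)) :=
        Real.sqrt_le_sqrt hLHS
    _ = (‖ξ‖ / Real.sqrt (1 - q)) * Real.sqrt ((inner ℂ η (Pop T amp n η) : ℂ).re) := by
        rw [Real.sqrt_mul (by positivity), Real.sqrt_mul (by positivity),
          Real.sqrt_sq (norm_nonneg ξ), Real.sqrt_inv]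
        ring

end
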